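/- Let (a_k)_{k≥0} be a sequence of nonnegative reals, ā ≥ 1, d₀ ≥ 0, K₀ ≥ 1, and suppose a_k ≤ ā · 2^{d₀ k} · max{a_{k-1}², K₀^{q_k}} for all k ≥ 1, where q_k = 2^k + c for some constant c ≥ 0, and a₀ ≤ M for some M ≥ K₀^{q_0}. Then for all k ≥ 0, a_k ≤ (2ā)^{2^k - 1} · 2^{d₀(2^{k+1} - k - 2)} · max{M^{2^k}, K₀^{q_k}}. -/

import Mathlib

/-- abstract Moser-iteration recursion lemma: if a_k ≥ 0 satisfies
a_k ≤ ā·2^{d₀ k}·max{a_{k-1}², K₀^{q_k}} for k ≥ 1, with q_k = 2^k + c, c ≥ 0,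
ā, K₀ ≥ 1, d₀ ≥ 0, and a₀ ≤ M with M ≥ K₀^{q_0}, then for all k,
a_k ≤ (2ā)^{2^k-1} · 2^{d₀(2^{k+1}-k-2)} · max{M^{2^k}, K₀^{q_k}}. -/
theorem stmt_12 (a : ℕ → ℝ) (abar d₀ K₀ c M : ℝ)
    (ha : ∀ k, 0 ≤ a k) (habar : 1 ≤ abar) (hd₀ : 0 ≤ d₀) (hK₀ : 1 ≤ K₀)
    (hc : 0 ≤ c)
    (q : ℕ → ℝ) (hq : ∀ k : ℕ, q k = 2 ^ k + c)
    (hrec : ∀ k : ℕ, a (k + 1) ≤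
      abar * 2 ^ (d₀ * (k + 1)) * max ((a k) ^ 2) (K₀ ^ q (k + 1)))
    (ha0 : a 0 ≤ M) (hM : K₀ ^ q 0 ≤ M) :
    ∀ k : ℕ, a k ≤ (2 * abar) ^ ((2 : ℝ) ^ k - 1) *
      2 ^ (d₀ * (2 ^ (k + 1) - k - 2)) *
      max (M ^ ((2 : ℝ) ^ k)) (K₀ ^ q k) := by
  have hK0pos : (0:ℝ) < K₀ := lt_of_lt_of_le one_pos hK₀
  have habar0 : (0:ℝ) < abar := lt_of_lt_of_le one_pos habar
  have hP1 : (1:ℝ) ≤ 2 * abar := by linarith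
  have hP0 : (0:ℝ) < 2 * abar := by linarith
  have hq0 : q 0 = 1 + c := by rw [hq]; norm_num
  have hM1 : (1:ℝ) ≤ M := by
    have h1 : K₀ ^ (0:ℝ) ≤ K₀ ^ q 0 :=
      Real.rpow_le_rpow_of_exponent_le hK₀ (by rw [hq0]; linarith)
    rw [Real.rpow_zero] at h1
    linarith
  have hM0 : (0:ℝ) < M := lt_of_lt_of_le one_pos hM1
  have hKM : K₀ ^ ((1:ℝ) + c) ≤ M := by rw [← hq0]; exact hM
  have hpow1 : ∀ k : ℕ, (1:ℝ) ≤ (2:ℝ) ^ k := fun k => one_le_pow₀ one_le_two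
  have hkpow : ∀ k : ℕ, (k:ℝ) + 2 ≤ (2:ℝ) ^ (k + 1) := by
    intro k
    have h : k + 2 ≤ 2 ^ (k + 1) := Nat.lt_two_pow_self (n := k + 1)
    exact_mod_cast h
  have key : ∀ k : ℕ, a k ≤ (2 * abar) ^ ((2 : ℝ) ^ k - 1) *
      2 ^ (d₀ * (2 ^ (k + 1) - (k:ℝ) - 2)) * M ^ ((2 : ℝ) ^ k) := by
    intro k
    induction k with
    | zero =>
      norm_num [Real.rpow_zero, Real.rpow_one]
      exact ha0
    | succ k ih =>
      -- abbreviations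
      have hexp2 : (0:ℝ) ≤ d₀ * (2 ^ (k + 1) - (k:ℝ) - 2) := by
        have := hkpow k
        have h2 : (0:ℝ) ≤ 2 ^ (k + 1) - (k:ℝ) - 2 := by linarith
        positivity
      have hA1 : (1:ℝ) ≤ (2 * abar) ^ ((2 : ℝ) ^ k - 1) :=
        Real.one_le_rpow hP1 (by linarith [hpow1 k])
      have hB1 : (1:ℝ) ≤ (2:ℝ) ^ (d₀ * (2 ^ (k + 1) - (k:ℝ) - 2)) :=
        Real.one_le_rpow one_le_two hexp2
      -- square of M term
      have hMsq : (M ^ ((2:ℝ) ^ k)) ^ 2 = M ^ ((2:ℝ) ^ (k + 1)) := by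
        rw [pow_two, ← Real.rpow_add hM0]
        congr 1
        ring
      -- K₀ term bounded by M term
      have hKnext : K₀ ^ q (k + 1) ≤ M ^ ((2:ℝ) ^ (k + 1)) := by
        have h1 : q (k + 1) ≤ (1 + c) * (2:ℝ) ^ (k + 1) := by
          rw [hq]
          have := hpow1 (k + 1)
          nlinarith
        calc K₀ ^ q (k + 1) ≤ K₀ ^ ((1 + c) * (2:ℝ) ^ (k + 1)) :=
              Real.rpow_le_rpow_of_exponent_le hK₀ h1
          _ = (K₀ ^ ((1:ℝ) + c)) ^ ((2:ℝ) ^ (k + 1)) := Real.rpow_mul hK0pos.le _ _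
          _ ≤ M ^ ((2:ℝ) ^ (k + 1)) :=
              Real.rpow_le_rpow (by positivity) hKM (by positivity)
      -- the max is bounded by T_k ^ 2
      have hTk2 : max ((a k) ^ 2) (K₀ ^ q (k + 1)) ≤
          ((2 * abar) ^ ((2 : ℝ) ^ k - 1) *
            2 ^ (d₀ * (2 ^ (k + 1) - (k:ℝ) - 2)) * M ^ ((2 : ℝ) ^ k)) ^ 2 := by
        apply max_le
        · exact pow_le_pow_left₀ (ha k) ih 2
        · refine hKnext.trans ?_
          rw [mul_pow, mul_pow, hMsq]
          have hM2 : (0:ℝ) ≤ M ^ ((2:ℝ) ^ (k + 1)) := by positivity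
          have hA2 : (1:ℝ) ≤ ((2 * abar) ^ ((2 : ℝ) ^ k - 1)) ^ 2 := one_le_pow₀ hA1
          have hB2 : (1:ℝ) ≤ ((2:ℝ) ^ (d₀ * (2 ^ (k + 1) - (k:ℝ) - 2))) ^ 2 :=
            one_le_pow₀ hB1
          have hAB : (1:ℝ) ≤ ((2 * abar) ^ ((2 : ℝ) ^ k - 1)) ^ 2 *
              ((2:ℝ) ^ (d₀ * (2 ^ (k + 1) - (k:ℝ) - 2))) ^ 2 := by nlinarith
          calc M ^ ((2:ℝ) ^ (k + 1)) = 1 * M ^ ((2:ℝ) ^ (k + 1)) := (one_mul _).symm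
            _ ≤ ((2 * abar) ^ ((2 : ℝ) ^ k - 1)) ^ 2 *
                ((2:ℝ) ^ (d₀ * (2 ^ (k + 1) - (k:ℝ) - 2))) ^ 2 *
                M ^ ((2:ℝ) ^ (k + 1)) := mul_le_mul_of_nonneg_right hAB hM2
      have step := (hrec k).trans
        (mul_le_mul_of_nonneg_left hTk2 (by positivity))
      refine step.trans ?_
      -- algebra: combine the powers
      have eA : ((2 * abar) ^ ((2 : ℝ) ^ k - 1)) ^ 2 =
          (2 * abar) ^ ((2:ℝ) ^ (k + 1) - 2) := by
        rw [pow_two, ← Real.rpow_add hP0]; congr 1; ring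
      have eB : (2:ℝ) ^ (d₀ * ((k:ℝ) + 1)) *
          ((2:ℝ) ^ (d₀ * (2 ^ (k + 1) - (k:ℝ) - 2))) ^ 2 =
          (2:ℝ) ^ (d₀ * (2 ^ (k + 1 + 1) - ((k:ℕ)+1:ℝ) - 2)) := by
        rw [pow_two, ← Real.rpow_add two_pos, ← Real.rpow_add two_pos]
        congr 1
        ring
      have eP : (2 * abar) ^ ((2:ℝ) ^ (k + 1) - 1) =
          (2 * abar) ^ ((2:ℝ) ^ (k + 1) - 2) * (2 * abar) := by
        rw [show (2:ℝ) ^ (k + 1) - 1 = ((2:ℝ) ^ (k + 1) - 2) + 1 by ring,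
          Real.rpow_add hP0, Real.rpow_one]
      rw [mul_pow, mul_pow, hMsq, eA]
      push_cast
      calc abar * 2 ^ (d₀ * ((k:ℝ) + 1)) *
            ((2 * abar) ^ ((2:ℝ) ^ (k + 1) - 2) *
              ((2:ℝ) ^ (d₀ * (2 ^ (k + 1) - (k:ℝ) - 2))) ^ 2 * M ^ ((2:ℝ) ^ (k + 1)))
          = (2:ℝ) ^ (d₀ * ((k:ℝ) + 1)) *
              ((2:ℝ) ^ (d₀ * (2 ^ (k + 1) - (k:ℝ) - 2))) ^ 2 *
              ((2 * abar) ^ ((2:ℝ) ^ (k + 1) - 2) * abar) * M ^ ((2:ℝ) ^ (k + 1)) := by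
            ring
        _ ≤ (2:ℝ) ^ (d₀ * ((k:ℝ) + 1)) *
              ((2:ℝ) ^ (d₀ * (2 ^ (k + 1) - (k:ℝ) - 2))) ^ 2 *
              ((2 * abar) ^ ((2:ℝ) ^ (k + 1) - 2) * (2 * abar)) *
              M ^ ((2:ℝ) ^ (k + 1)) := by
            gcongr
            linarith
        _ = (2 * abar) ^ ((2:ℝ) ^ (k + 1) - 2) * (2 * abar) *
              ((2:ℝ) ^ (d₀ * ((k:ℝ) + 1)) *
                ((2:ℝ) ^ (d₀ * (2 ^ (k + 1) - (k:ℝ) - 2))) ^ 2) *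
              M ^ ((2:ℝ) ^ (k + 1)) := by ring
        _ = (2 * abar) ^ ((2:ℝ) ^ (k + 1) - 1) *
              (2:ℝ) ^ (d₀ * (2 ^ (k + 1 + 1) - ((k:ℝ)+1) - 2)) *
              M ^ ((2:ℝ) ^ (k + 1)) := by rw [eB, eP]
  intro k
  refine (key k).trans ?_
  exact mul_le_mul_of_nonneg_left (le_max_left _ _) (by positivity)
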